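/- Let v : [0,∞) × [0,1] → ℝ be continuous, and suppose there is a measurable g on (0,∞) × (0,1) with ∫_{(0,∞)×(0,1)} |g(t,y)|^p dt dy < ∞ such that for every y ∈ [0,1] and all 0 ≤ x₀ ≤ x₁, v(x₁,y) − v(x₀,y) = ∫_{x₀}^{x₁} g(t,y) dt. Let t(x) = min_{0 ≤ y ≤ 1} v(x,y). Then limsup_{x → ∞} t(x)/x^{1−1/p} ≤ 0. (This is the key growth estimate in the paper's proof that every quasiharmonic function with finite p-energy on the unweighted strip ℝ × [0,1] is constant.) -/

import Mathlib

open MeasureTheory Set Filter Topology ENNReal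

/-- Growth estimate on the strip: if `v` is continuous on
`[0,∞) × [0,1]`, each horizontal slice satisfies the fundamental theorem of
calculus with derivative `g`, and `g` has finite `p`-energy
`∫∫_{(0,∞)×(0,1)} |g|^p dt dy < ∞`, then the slice-minimum
`t(x) = min_{0 ≤ y ≤ 1} v(x,y)` satisfies
`limsup_{x→∞} t(x)/x^{1-1/p} ≤ 0` (stated in its `ε`-form). -/
theorem stmt_11 (p : ℝ) (hp : 1 < p)
    (v g : ℝ → ℝ → ℝ)
    (hv_cont : ContinuousOn (fun q : ℝ × ℝ => v q.1 q.2)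
      (Ici (0 : ℝ) ×ˢ Icc (0 : ℝ) 1))
    (hg_meas : Measurable (fun q : ℝ × ℝ => g q.1 q.2))
    (henergy : (∫⁻ q : ℝ × ℝ in Ioi (0 : ℝ) ×ˢ Ioo (0 : ℝ) 1,
      ENNReal.ofReal (|g q.1 q.2| ^ p)) < ⊤)
    (hftc : ∀ y ∈ Icc (0 : ℝ) 1, ∀ x₀ x₁ : ℝ, 0 ≤ x₀ → x₀ ≤ x₁ →
      v x₁ y - v x₀ y = ∫ s in Ioc x₀ x₁, g s y)
    (t : ℝ → ℝ)
    (ht : ∀ x : ℝ, 0 ≤ x → IsLeast ((fun y => v x y) '' Icc (0 : ℝ) 1) (t x)) :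
    ∀ ε : ℝ, 0 < ε → ∀ᶠ x in atTop, t x ≤ ε * x ^ (1 - 1 / p) := by
  intro ε hε
  have hp0 : 0 < p := lt_trans one_pos hp
  have hα : 0 < 1 - 1 / p := by
    have : 1 / p < 1 := by
      rw [div_lt_one hp0]; exact hp
    linarith
  have hε2 : 0 < ε / 2 := half_pos hε
  -- measurability of the densities
  have hgabs : Measurable (fun z : ℝ × ℝ => ENNReal.ofReal |g z.1 z.2|) :=
    hg_meas.abs.ennreal_ofReal
  have hgp : Measurable (fun z : ℝ × ℝ => ENNReal.ofReal (|g z.1 z.2| ^ p)) :=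
    (hg_meas.abs.pow_const p).ennreal_ofReal
  -- choose x₀ = N large so that the tail energy is small
  obtain ⟨N, hN⟩ : ∃ N : ℕ, (∫⁻ z : ℝ × ℝ in Ioi (N : ℝ) ×ˢ Ioo (0 : ℝ) 1,
      ENNReal.ofReal (|g z.1 z.2| ^ p)) ≤ ENNReal.ofReal ((ε / 2) ^ p) := by
    set ν : Measure (ℝ × ℝ) := volume.withDensity
      (fun z => ENNReal.ofReal (|g z.1 z.2| ^ p)) with hν
    have hmeas : ∀ n : ℕ, MeasurableSet (Ioi (n : ℝ) ×ˢ Ioo (0 : ℝ) 1) :=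
      fun n => measurableSet_Ioi.prod measurableSet_Ioo
    have happ : ∀ n : ℕ, ν (Ioi (n : ℝ) ×ˢ Ioo (0 : ℝ) 1) =
        ∫⁻ z : ℝ × ℝ in Ioi (n : ℝ) ×ˢ Ioo (0 : ℝ) 1,
          ENNReal.ofReal (|g z.1 z.2| ^ p) := fun n =>
      withDensity_apply _ (hmeas n)
    have hanti : Antitone (fun n : ℕ => Ioi (n : ℝ) ×ˢ Ioo (0 : ℝ) 1) := by
      intro m n hmn
      exact prod_mono (Ioi_subset_Ioi (by exact_mod_cast hmn)) le_rfl
    have hinter : (⋂ n : ℕ, Ioi (n : ℝ) ×ˢ Ioo (0 : ℝ) 1) = ∅ := by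
      ext z
      simp only [mem_iInter, mem_prod, mem_Ioi, mem_Ioo, mem_empty_iff_false, iff_false,
        not_forall]
      obtain ⟨n, hn⟩ := exists_nat_gt z.1
      exact ⟨n, fun h => absurd h.1 (not_lt.2 hn.le)⟩
    have hfin : ν (Ioi ((0 : ℕ) : ℝ) ×ˢ Ioo (0 : ℝ) 1) ≠ ⊤ := by
      rw [happ 0]
      push_cast
      exact henergy.ne
    have htend : Tendsto (fun n : ℕ => ν (Ioi (n : ℝ) ×ˢ Ioo (0 : ℝ) 1)) atTop (𝓝 0) := by
      have := tendsto_measure_iInter_atTop (μ := ν)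
        (fun n => (hmeas n).nullMeasurableSet) hanti ⟨0, hfin⟩
      rw [hinter] at this
      simpa [Function.comp_def] using this
    have hpos : (0 : ℝ≥0∞) < ENNReal.ofReal ((ε / 2) ^ p) := by
      rw [ENNReal.ofReal_pos]
      positivity
    obtain ⟨n, hn⟩ := (htend.eventually_lt_const hpos).exists
    exact ⟨n, by rw [← happ n]; exact hn.le⟩
  set x₀ : ℝ := (N : ℝ) with hx₀def
  have hx₀ : 0 ≤ x₀ := Nat.cast_nonneg N
  -- continuity / integrability of slices
  have hslice : ∀ a : ℝ, 0 ≤ a → ContinuousOn (fun y => v a y) (Icc (0 : ℝ) 1) := by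
    intro a ha
    have : ContinuousOn (fun y : ℝ => ((a, y) : ℝ × ℝ)) (Icc (0 : ℝ) 1) :=
      (Continuous.prodMk_right a).continuousOn
    exact hv_cont.comp this (fun y hy => ⟨ha, hy⟩)
  have hint : ∀ a : ℝ, 0 ≤ a → IntegrableOn (fun y => v a y) (Icc (0 : ℝ) 1) :=
    fun a ha => (hslice a ha).integrableOn_Icc
  set C : ℝ := ∫ y in Icc (0 : ℝ) 1, v x₀ y with hC
  -- the main estimate for x ≥ x₀
  have hmain : ∀ x : ℝ, x₀ ≤ x → t x ≤ C + ε / 2 * x ^ (1 - 1 / p) := by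
    intro x hx
    have hx0 : 0 ≤ x := le_trans hx₀ hx
    -- t x ≤ ∫ v x
    have h1 : t x ≤ ∫ y in Icc (0 : ℝ) 1, v x y := by
      have : t x = ∫ _y in Icc (0 : ℝ) 1, t x := by
        rw [setIntegral_const, measureReal_def, Real.volume_Icc]
        norm_num
      rw [this]
      refine setIntegral_mono_on (integrableOn_const (by
        rw [Real.volume_Icc]; norm_num)) (hint x hx0) measurableSet_Icc ?_
      intro y hy
      exact (ht x hx0).2 (mem_image_of_mem _ hy)
    -- split off the constant
    have hsub : IntegrableOn (fun y => v x y - v x₀ y) (Icc (0 : ℝ) 1) :=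
      (hint x hx0).sub (hint x₀ hx₀)
    have h2 : (∫ y in Icc (0 : ℝ) 1, v x y) =
        C + ∫ y in Icc (0 : ℝ) 1, (v x y - v x₀ y) := by
      rw [hC, ← integral_add (hint x₀ hx₀) hsub]
      congr 1
      ext y
      ring
    -- bound the difference integral
    have key : (∫ y in Icc (0 : ℝ) 1, (v x y - v x₀ y)) ≤ ε / 2 * x ^ (1 - 1 / p) := by
      have habs : (∫ y in Icc (0 : ℝ) 1, (v x y - v x₀ y)) ≤
          ∫ y in Icc (0 : ℝ) 1, |v x y - v x₀ y| :=
        integral_mono hsub hsub.abs (fun y => le_abs_self _)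
      -- turn into a lintegral
      have hsm : AEStronglyMeasurable (fun y => v x y - v x₀ y)
          (volume.restrict (Icc (0 : ℝ) 1)) :=
        (((hslice x hx0).sub (hslice x₀ hx₀)).aestronglyMeasurable measurableSet_Icc)
      have heq : (∫ y in Icc (0 : ℝ) 1, |v x y - v x₀ y|) =
          (∫⁻ y in Icc (0 : ℝ) 1, ENNReal.ofReal |v x y - v x₀ y|).toReal := by
        rw [integral_eq_lintegral_of_nonneg_ae (ae_of_all _ fun y => abs_nonneg _)
          (by simpa [Real.norm_eq_abs] using hsm.norm)]
      -- restrict to the open interval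
      have hIoo : volume.restrict (Icc (0 : ℝ) 1) = volume.restrict (Ioo (0 : ℝ) 1) :=
        (Measure.restrict_congr_set Ioo_ae_eq_Icc).symm
      -- pointwise bound by the inner lintegral of |g|
      have hpt : ∀ y ∈ Ioo (0 : ℝ) 1, ENNReal.ofReal |v x y - v x₀ y| ≤
          ∫⁻ s in Ioc x₀ x, ENNReal.ofReal |g s y| := by
        intro y hy
        have hyI : y ∈ Icc (0 : ℝ) 1 := Ioo_subset_Icc_self hy
        rw [hftc y hyI x₀ x hx₀ hx]
        by_cases hgi : IntegrableOn (fun s => g s y) (Ioc x₀ x)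
        · calc ENNReal.ofReal |∫ s in Ioc x₀ x, g s y|
              ≤ ENNReal.ofReal (∫ s in Ioc x₀ x, |g s y|) := by
                refine ENNReal.ofReal_le_ofReal ?_
                simpa [Real.norm_eq_abs] using
                  norm_integral_le_integral_norm (μ := volume.restrict (Ioc x₀ x))
                    (fun s => g s y)
            _ = ∫⁻ s in Ioc x₀ x, ENNReal.ofReal |g s y| := by
                rw [ofReal_integral_eq_lintegral_ofReal hgi.abs
                  (ae_of_all _ fun s => abs_nonneg _)]
        · rw [integral_undef hgi]
          simp
      -- the double lintegral
      have hdouble : (∫⁻ y in Ioo (0 : ℝ) 1, ∫⁻ s in Ioc x₀ x, ENNReal.ofReal |g s y|) =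
          ∫⁻ z : ℝ × ℝ in Ioc x₀ x ×ˢ Ioo (0 : ℝ) 1, ENNReal.ofReal |g z.1 z.2| := by
        rw [Measure.volume_eq_prod, ← Measure.prod_restrict, lintegral_prod _ hgabs.aemeasurable]
        exact lintegral_lintegral_swap (hgabs.comp measurable_swap).aemeasurable
      have hL : (∫⁻ y in Icc (0 : ℝ) 1, ENNReal.ofReal |v x y - v x₀ y|) ≤
          ∫⁻ z : ℝ × ℝ in Ioc x₀ x ×ˢ Ioo (0 : ℝ) 1, ENNReal.ofReal |g z.1 z.2| := by
        rw [hIoo, ← hdouble]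
        refine setLIntegral_mono_ae ?_ (ae_of_all _ hpt)
        exact (Measurable.lintegral_prod_right (ν := volume.restrict (Ioc x₀ x))
          (f := fun (y s : ℝ) => ENNReal.ofReal |g s y|) (hgabs.comp measurable_swap)).aemeasurable
      -- Hölder
      set q : ℝ := Real.conjExponent p with hq
      have hpq : p.HolderConjugate q := Real.HolderConjugate.conjExponent hp
      have hqinv : 1 / q = 1 - 1 / p := by
        rw [hq, Real.conjExponent]
        field_simp
      have hbox : (volume (Ioc x₀ x ×ˢ Ioo (0 : ℝ) 1)) = ENNReal.ofReal (x - x₀) := by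
        rw [Measure.volume_eq_prod, Measure.prod_prod, Real.volume_Ioc, Real.volume_Ioo]
        norm_num
      have hholder : (∫⁻ z : ℝ × ℝ in Ioc x₀ x ×ˢ Ioo (0 : ℝ) 1, ENNReal.ofReal |g z.1 z.2|) ≤
          (∫⁻ z : ℝ × ℝ in Ioc x₀ x ×ˢ Ioo (0 : ℝ) 1,
            ENNReal.ofReal (|g z.1 z.2| ^ p)) ^ (1 / p) *
          (ENNReal.ofReal (x - x₀)) ^ (1 / q) := by
        have := ENNReal.lintegral_mul_le_Lp_mul_Lq
          (volume.restrict (Ioc x₀ x ×ˢ Ioo (0 : ℝ) 1)) hpq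
          hgabs.aemeasurable.restrict (aemeasurable_const (b := (1 : ℝ≥0∞)))
        simp only [Pi.mul_apply, mul_one, one_mul, ENNReal.one_rpow, lintegral_const,
          Measure.restrict_apply MeasurableSet.univ, univ_inter] at this
        rw [hbox] at this
        refine le_trans (le_of_eq ?_) (this.trans (le_of_eq ?_))
        · rfl
        · congr 1
          refine congrArg (· ^ (1 / p)) ?_
          refine lintegral_congr fun z => ?_
          rw [← ENNReal.ofReal_rpow_of_nonneg (abs_nonneg _) hp0.le]
      -- bound the energy factor
      have henergy_tail : (∫⁻ z : ℝ × ℝ in Ioc x₀ x ×ˢ Ioo (0 : ℝ) 1,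
          ENNReal.ofReal (|g z.1 z.2| ^ p)) ≤ ENNReal.ofReal ((ε / 2) ^ p) := by
        refine le_trans (lintegral_mono_set ?_) hN
        exact prod_mono Ioc_subset_Ioi_self le_rfl
      have hfac1 : (∫⁻ z : ℝ × ℝ in Ioc x₀ x ×ˢ Ioo (0 : ℝ) 1,
          ENNReal.ofReal (|g z.1 z.2| ^ p)) ^ (1 / p) ≤ ENNReal.ofReal (ε / 2) := by
        calc _ ≤ (ENNReal.ofReal ((ε / 2) ^ p)) ^ (1 / p) :=
              ENNReal.rpow_le_rpow henergy_tail (by positivity)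
          _ = ENNReal.ofReal (ε / 2) := by
              rw [← ENNReal.ofReal_rpow_of_nonneg hε2.le hp0.le, ← ENNReal.rpow_mul,
                mul_one_div_cancel hp0.ne', ENNReal.rpow_one]
      have hfac2 : (ENNReal.ofReal (x - x₀)) ^ (1 / q) ≤
          ENNReal.ofReal (x ^ (1 - 1 / p)) := by
        rw [hqinv, ENNReal.ofReal_rpow_of_nonneg (sub_nonneg.2 hx) hα.le]
        exact ENNReal.ofReal_le_ofReal
          (Real.rpow_le_rpow (sub_nonneg.2 hx) (sub_le_self x hx₀) hα.le)
      -- put everything together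
      have hfin2 : (ENNReal.ofReal (ε / 2) * ENNReal.ofReal (x ^ (1 - 1 / p))) ≠ ⊤ :=
        ENNReal.mul_ne_top ENNReal.ofReal_ne_top ENNReal.ofReal_ne_top
      have hLfin : (∫⁻ y in Icc (0 : ℝ) 1, ENNReal.ofReal |v x y - v x₀ y|) ≤
          ENNReal.ofReal (ε / 2) * ENNReal.ofReal (x ^ (1 - 1 / p)) :=
        hL.trans (hholder.trans (mul_le_mul' hfac1 hfac2))
      calc (∫ y in Icc (0 : ℝ) 1, (v x y - v x₀ y))
          ≤ ∫ y in Icc (0 : ℝ) 1, |v x y - v x₀ y| := habs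
        _ = (∫⁻ y in Icc (0 : ℝ) 1, ENNReal.ofReal |v x y - v x₀ y|).toReal := heq
        _ ≤ (ENNReal.ofReal (ε / 2) * ENNReal.ofReal (x ^ (1 - 1 / p))).toReal :=
            ENNReal.toReal_mono hfin2 hLfin
        _ = ε / 2 * x ^ (1 - 1 / p) := by
            rw [ENNReal.toReal_mul, ENNReal.toReal_ofReal hε2.le,
              ENNReal.toReal_ofReal (Real.rpow_nonneg hx0 _)]
    linarith [h1, h2.le, key]
  -- conclude: eventually the constant is absorbed
  have htop : Tendsto (fun x : ℝ => ε / 2 * x ^ (1 - 1 / p)) atTop atTop :=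
    (tendsto_rpow_atTop hα).const_mul_atTop hε2
  filter_upwards [eventually_ge_atTop x₀, htop.eventually_ge_atTop C] with x hx hC' 
  calc t x ≤ C + ε / 2 * x ^ (1 - 1 / p) := hmain x hx
    _ ≤ ε / 2 * x ^ (1 - 1 / p) + ε / 2 * x ^ (1 - 1 / p) := by linarith
    _ = ε * x ^ (1 - 1 / p) := by ring
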